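/- Define ℓ(λ, p, a, a*) = m₀ log p + m₊ log(1−p) + m₊ log a + n₀ log(1−λ) + n₀ log p + n₊ log((1−λ)(1−p)a* + λ/n₊) on the region Θ₂* = {λ ∈ [0,1), p ∈ (0,1), a = 1/m₊, a* = 0} (with constraint m₊a + n₊a* = 1). Then the maximum of ℓ over Θ₂* equals (m₀+n₀)log(m₀+n₀) + n₀ log n₀ − n log n − (m+n₀)log(m+n₀), attained at λ = n₊/n and p = (m₀+n₀)/(m₀+n₀+m₊), where m = m₀+m₊ and n = n₀+n₊, assuming m₀, m₊, n₀, n₊ are positive integers. -/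

import Mathlib

lemma key (a b x : ℝ) (ha : 0 < a) (hb : 0 < b) (hx : 0 < x) (hx1 : x < 1) :
    a * Real.log x + b * Real.log (1-x) ≤
    a * Real.log a + b * Real.log b - (a+b) * Real.log (a+b) := by
  have hab : 0 < a + b := by linarith
  have h1x : (0:ℝ) < 1 - x := by linarith
  have h1 : Real.log (x*(a+b)/a) ≤ x*(a+b)/a - 1 := Real.log_le_sub_one_of_pos (by positivity)
  have h2 : Real.log ((1-x)*(a+b)/b) ≤ (1-x)*(a+b)/b - 1 := Real.log_le_sub_one_of_pos (by positivity)
  rw [Real.log_div (by positivity) ha.ne', Real.log_mul hx.ne' hab.ne'] at h1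
  rw [Real.log_div (by positivity) hb.ne', Real.log_mul h1x.ne' hab.ne'] at h2
  have g1 := mul_le_mul_of_nonneg_left h1 ha.le
  have g2 := mul_le_mul_of_nonneg_left h2 hb.le
  have e1 : a * (x*(a+b)/a - 1) = x*(a+b) - a := by field_simp
  have e2 : b * ((1-x)*(a+b)/b - 1) = (1-x)*(a+b) - b := by field_simp
  rw [e1] at g1; rw [e2] at g2
  nlinarith [g1, g2]


/-- The profile empirical log-likelihood
`ℓ(λ,p,a,a*) = m₀ log p + m₊ log(1-p) + m₊ log a + n₀ log(1-λ) + n₀ log p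
  + n₊ log((1-λ)(1-p)a* + λ/n₊)`
restricted to the region `Θ₂*` (where `a = 1/m₊`, `a* = 0`, `λ ∈ (0,1)`, `p ∈ (0,1)`)
is maximized at `λ = n₊/n`, `p = (m₀+n₀)/(m₀+n₀+m₊)`, with maximum value
`(m₀+n₀)log(m₀+n₀) + n₀ log n₀ − n log n − (m+n₀)log(m+n₀)`,
where `m = m₀+m₊` and `n = n₀+n₊`. -/
theorem stmt5 (m₀ mp n₀ np : ℕ) (hm₀ : 0 < m₀) (hmp : 0 < mp) (hn₀ : 0 < n₀) (hnp : 0 < np) :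
    (∀ lam p : ℝ, 0 < lam → lam < 1 → 0 < p → p < 1 →
      (m₀ : ℝ) * Real.log p + (mp : ℝ) * Real.log (1 - p) + (mp : ℝ) * Real.log (1 / (mp : ℝ)) +
          (n₀ : ℝ) * Real.log (1 - lam) + (n₀ : ℝ) * Real.log p +
          (np : ℝ) * Real.log ((1 - lam) * (1 - p) * 0 + lam / (np : ℝ)) ≤
        ((m₀ : ℝ) + n₀) * Real.log ((m₀ : ℝ) + n₀) + (n₀ : ℝ) * Real.log (n₀ : ℝ) -
          ((n₀ : ℝ) + np) * Real.log ((n₀ : ℝ) + np) -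
          (((m₀ : ℝ) + mp) + n₀) * Real.log (((m₀ : ℝ) + mp) + n₀)) ∧
    ((m₀ : ℝ) * Real.log (((m₀ : ℝ) + n₀) / ((m₀ : ℝ) + n₀ + mp)) +
        (mp : ℝ) * Real.log (1 - ((m₀ : ℝ) + n₀) / ((m₀ : ℝ) + n₀ + mp)) +
        (mp : ℝ) * Real.log (1 / (mp : ℝ)) +
        (n₀ : ℝ) * Real.log (1 - (np : ℝ) / ((n₀ : ℝ) + np)) +
        (n₀ : ℝ) * Real.log (((m₀ : ℝ) + n₀) / ((m₀ : ℝ) + n₀ + mp)) +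
        (np : ℝ) * Real.log ((1 - (np : ℝ) / ((n₀ : ℝ) + np)) *
            (1 - ((m₀ : ℝ) + n₀) / ((m₀ : ℝ) + n₀ + mp)) * 0 +
          ((np : ℝ) / ((n₀ : ℝ) + np)) / (np : ℝ)) =
      ((m₀ : ℝ) + n₀) * Real.log ((m₀ : ℝ) + n₀) + (n₀ : ℝ) * Real.log (n₀ : ℝ) -
        ((n₀ : ℝ) + np) * Real.log ((n₀ : ℝ) + np) -
        (((m₀ : ℝ) + mp) + n₀) * Real.log (((m₀ : ℝ) + mp) + n₀)) := by
  have hA : (0:ℝ) < m₀ := by exact_mod_cast hm₀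
  have hB : (0:ℝ) < mp := by exact_mod_cast hmp
  have hC : (0:ℝ) < n₀ := by exact_mod_cast hn₀
  have hD : (0:ℝ) < np := by exact_mod_cast hnp
  set A := (m₀:ℝ); set B := (mp:ℝ); set C := (n₀:ℝ); set D := (np:ℝ)
  have hS1 : (0:ℝ) < A + C := by linarith
  have hS2 : (0:ℝ) < A + C + B := by linarith
  have hS3 : (0:ℝ) < C + D := by linarith
  constructor
  · intro lam p hl hl1 hp hp1
    have k1 := key (A+C) B p hS1 hB hp hp1
    have k2 := key D C lam hD hC hl hl1
    have e2 : (A+C)+B = (A+B)+C := by ring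
    have e3 : D + C = C + D := by ring
    rw [e2] at k1; rw [e3] at k2
    have r1 : Real.log (1/B) = - Real.log B := by
      rw [Real.log_div one_ne_zero hB.ne', Real.log_one]; ring
    have r2 : (1 - lam) * (1 - p) * 0 + lam / D = lam / D := by ring
    rw [r1, r2, Real.log_div hl.ne' hD.ne']
    nlinarith [k1, k2]
  · have hp2 : 1 - (A+C)/(A+C+B) = B/(A+C+B) := by field_simp; ring
    have hl2 : 1 - D/(C+D) = C/(C+D) := by field_simp; ring
    have ht : (1 - D/(C+D)) * (1 - (A+C)/(A+C+B)) * 0 + (D/(C+D))/D = 1/(C+D) := by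
      field_simp; ring
    rw [ht, hp2, hl2,
      Real.log_div hS1.ne' hS2.ne', Real.log_div hB.ne' hS2.ne',
      Real.log_div one_ne_zero hB.ne', Real.log_div hC.ne' hS3.ne',
      Real.log_div one_ne_zero hS3.ne', Real.log_one]
    have e2 : A + C + B = (A+B)+C := by ring
    rw [e2]
    ring
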